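/- Let A be an LB-algebra, i.e. a Banach algebra with a closed generating cone A₊ satisfying ‖x + y‖ = ‖x‖ + ‖y‖ for x, y ∈ A₊, together with a positive functional e ∈ A* with e(v) = ‖v‖ for all v ∈ A₊. If A** has a left invariant mean m (i.e. ‖m‖ = 1, m ∈ A**₊, and a·m = e(a)m in A** for all a ∈ A, where the product is the Arens product), then A has a left weak approximate invariant mean: a net (a_i) in S = {x ∈ A₊ : ‖x‖ = 1} such that a a_i − a_i → 0 weakly for all a ∈ S. -/
import Mathlib


open Filter Topology

/-- An LB-algebra: a Banach algebra with a closed generating L-cone `P` and a positive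
functional `e` computing the norm on the cone. -/
structure LBAlgebra (A : Type) [NonUnitalNormedRing A] [NormedSpace ℝ A]
    [IsScalarTower ℝ A A] [SMulCommClass ℝ A A] [CompleteSpace A] where
  P : Set A
  closed : IsClosed P
  zero_mem : (0 : A) ∈ P
  add_mem : ∀ x ∈ P, ∀ y ∈ P, x + y ∈ P
  smul_mem : ∀ c : ℝ, 0 ≤ c → ∀ x ∈ P, c • x ∈ P
  generating : ∀ a : A, ∃ x ∈ P, ∃ y ∈ P, a = x - y
  Lcone : ∀ x ∈ P, ∀ y ∈ P, ‖x + y‖ = ‖x‖ + ‖y‖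
  e : A →L[ℝ] ℝ
  e_eq : ∀ v ∈ P, e v = ‖v‖

/-- The action `a · m` of `A` on the bidual `A**` induced by the (first) Arens product:
`(a · m)(f) = m (f · a)` with `(f · a)(b) = f (a * b)`. -/
noncomputable def arensAct (A : Type) [NonUnitalNormedRing A] [NormedSpace ℝ A]
    [IsScalarTower ℝ A A] [SMulCommClass ℝ A A]
    (a : A) (m : (A →L[ℝ] ℝ) →L[ℝ] ℝ) : (A →L[ℝ] ℝ) →L[ℝ] ℝ :=
  m.comp ((ContinuousLinearMap.compL ℝ A A ℝ).flip (ContinuousLinearMap.mul ℝ A a))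


set_option maxHeartbeats 1600000 in
/-- If the bidual of an LB-algebra `A` has a left invariant mean `m`
(positive in the sense that it lies in the weak* closure of the image of the cone,
of norm one, and `a · m = e(a) m` for the Arens action), then `A` has a left weak
approximate `(aᵢ)` in `S = {x ∈ A₊ : ‖x‖ = 1}` with
`a aᵢ - aᵢ → 0` weakly for every `a ∈ S`. -/
theorem left_invariant_mean_gives_weak_approx_invariant_mean
    (A : Type) [NonUnitalNormedRing A] [NormedSpace ℝ A]
    [IsScalarTower ℝ A A] [SMulCommClass ℝ A A] [CompleteSpace A]
    (LB : LBAlgebra A) (m : (A →L[ℝ] ℝ) →L[ℝ] ℝ)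
    (hm_pos : ∀ (F : Finset (A →L[ℝ] ℝ)) (ε : ℝ), 0 < ε →
        ∃ x ∈ LB.P, ∀ f ∈ F, |m f - f x| < ε)
    (hm_norm : ‖m‖ = 1)
    (hm_inv : ∀ a : A, arensAct A a m = LB.e a • m) :
    ∃ (ι : Type) (l : Filter ι) (a : ι → A), l.NeBot ∧
      (∀ i, a i ∈ LB.P ∧ ‖a i‖ = 1) ∧
      ∀ x ∈ LB.P, ‖x‖ = 1 →
        ∀ f : A →L[ℝ] ℝ, Tendsto (fun i => f (x * a i - a i)) l (𝓝 0) := by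
  classical
  have he_norm : ∀ a : A, |LB.e a| ≤ ‖a‖ := by
    intro a
    obtain ⟨x, hx, y, hy, rfl⟩ := LB.generating a
    rw [map_sub, LB.e_eq x hx, LB.e_eq y hy]
    exact abs_norm_sub_norm_le x y
  have he_op : ‖LB.e‖ ≤ 1 := by
    refine LB.e.opNorm_le_bound zero_le_one fun a => ?_
    simpa [Real.norm_eq_abs] using he_norm a
  have hme_nonneg : 0 ≤ m LB.e := by
    refine le_of_forall_pos_le_add fun ε hε => ?_
    obtain ⟨x, hxP, hx⟩ := hm_pos {LB.e} ε hε
    have := abs_lt.mp (hx LB.e (Finset.mem_singleton_self LB.e))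
    have hex : LB.e x = ‖x‖ := LB.e_eq x hxP
    nlinarith [norm_nonneg x]
  have h1 : ‖m‖ ≤ m LB.e := by
    refine m.opNorm_le_bound hme_nonneg fun f => ?_
    rw [Real.norm_eq_abs]
    refine le_of_forall_pos_le_add fun ε hε => ?_
    have hε' : 0 < ε / (‖f‖ + 1) := by positivity
    obtain ⟨x, hxP, hx⟩ := hm_pos {LB.e, f} (ε / (‖f‖ + 1)) hε'
    have h1 := abs_lt.mp (hx LB.e (by simp))
    have hex : LB.e x = ‖x‖ := LB.e_eq x hxP
    have hfx : |f x| ≤ ‖f‖ * ‖x‖ := f.le_opNorm x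
    have hd : ε / (‖f‖ + 1) * (‖f‖ + 1) = ε := by field_simp
    have hmf : |m f| ≤ |f x| + ε / (‖f‖ + 1) := by
      have := abs_lt.mp (hx f (by simp))
      cases abs_cases (m f) <;> cases abs_cases (f x) <;> linarith
    have hxx : ‖f‖ * ‖x‖ ≤ ‖f‖ * (m LB.e + ε / (‖f‖ + 1)) :=
      mul_le_mul_of_nonneg_left (by nlinarith) (norm_nonneg f)
    nlinarith [norm_nonneg f]
  have he1 : m LB.e = 1 := by
    have h2 : m LB.e ≤ 1 := by
      calc m LB.e ≤ |m LB.e| := le_abs_self _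
      _ ≤ ‖m‖ * ‖LB.e‖ := m.le_opNorm LB.e
      _ ≤ 1 := by rw [hm_norm]; simpa using he_op
    linarith [hm_norm ▸ h1]
  -- the index type and the net
  set ι := Finset (A →L[ℝ] ℝ) × ℕ with hι
  have hε : ∀ i : ι, (0 : ℝ) < 1 / (i.2 + 1) := fun i => by positivity
  have key : ∀ i : ι, ∃ x ∈ LB.P, (∀ f ∈ i.1, |m f - f x| < 1 / (i.2 + 1)) ∧
      |1 - ‖x‖| < 1 / (i.2 + 1) := by
    intro i
    obtain ⟨x, hxP, hx⟩ := hm_pos (insert LB.e i.1) (1 / (i.2 + 1)) (hε i)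
    refine ⟨x, hxP, fun f hf => hx f (Finset.mem_insert_of_mem hf), ?_⟩
    have := hx LB.e (Finset.mem_insert_self _ _)
    rwa [he1, LB.e_eq x hxP] at this
  choose x hxP hxF hxn using key
  have hxpos : ∀ i : ι, 0 < ‖x i‖ := by
    intro i
    have h := abs_lt.mp (hxn i)
    have : (1 : ℝ) / (i.2 + 1) ≤ 1 := by
      rw [div_le_one (by positivity)]; push_cast; linarith
    linarith [h.2]
  set a : ι → A := fun i => ‖x i‖⁻¹ • x i with ha
  refine ⟨ι, atTop, a, atTop_neBot, fun i => ⟨LB.smul_mem _ (by positivity) _ (hxP i), ?_⟩,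
    ?_⟩
  · rw [norm_smul, Real.norm_eq_abs, abs_inv, abs_norm,
      inv_mul_cancel₀ (hxpos i).ne']
  intro x₀ hx₀P hx₀n f
  set g : A →L[ℝ] ℝ := f.comp (ContinuousLinearMap.mul ℝ A x₀) with hg
  have hmg : m g = m f := by
    have := congrArg (fun T => T f) (hm_inv x₀)
    simp only [arensAct, ContinuousLinearMap.comp_apply, ContinuousLinearMap.smul_apply,
      ContinuousLinearMap.flip_apply, ContinuousLinearMap.compL_apply] at this
    rw [LB.e_eq x₀ hx₀P, hx₀n, one_smul] at this
    exact this
  rw [Metric.tendsto_nhds]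
  intro δ hδ
  obtain ⟨N, hN⟩ := exists_nat_gt (8 / δ)
  filter_upwards [Filter.eventually_ge_atTop (({f, g} : Finset (A →L[ℝ] ℝ)), N + 1)] with i hi
  have hfi : f ∈ i.1 := hi.1 (by simp)
  have hgi : g ∈ i.1 := hi.1 (by simp)
  have hni : N + 1 ≤ i.2 := hi.2
  set εi : ℝ := 1 / (i.2 + 1) with hεi
  have hεipos : 0 < εi := hε i
  have hεhalf : εi ≤ 1 / 2 := by
    rw [hεi, div_le_div_iff₀ (by positivity) (by norm_num)]
    have : (1 : ℝ) ≤ i.2 := by exact_mod_cast Nat.one_le_iff_ne_zero.mpr (by omega)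
    linarith
  have hxi : (1 : ℝ) / 2 ≤ ‖x i‖ := by
    have := abs_lt.mp (hxn i)
    linarith [this.2]
  have hinv : ‖x i‖⁻¹ ≤ 2 := by
    rw [inv_le_comm₀ (hxpos i) (by norm_num)]
    linarith
  have hgf : |g (x i) - f (x i)| < 2 * εi := by
    have h1 := abs_lt.mp (hxF i f hfi)
    have h2 := abs_lt.mp (hxF i g hgi)
    rw [hmg] at h2
    cases abs_cases (g (x i) - f (x i)) <;> linarith
  have hval : f (x₀ * a i - a i) = ‖x i‖⁻¹ * (g (x i) - f (x i)) := by
    rw [ha]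
    simp only [mul_smul_comm, map_sub, map_smul, smul_eq_mul, hg,
      ContinuousLinearMap.comp_apply, ContinuousLinearMap.mul_apply']
    ring
  rw [Real.dist_eq, sub_zero, hval, abs_mul, abs_inv, abs_norm]
  have hb : ‖x i‖⁻¹ * |g (x i) - f (x i)| ≤ 2 * (2 * εi) := by
    have := mul_le_mul hinv hgf.le (abs_nonneg _) (by norm_num)
    linarith
  have hlast : 2 * (2 * εi) < δ := by
    have hN2 : (N : ℝ) ≤ (i.2 : ℝ) + 1 := by
      have : (N : ℝ) ≤ i.2 := by exact_mod_cast le_trans (Nat.le_succ N) hni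
      linarith
    have hpos : (0 : ℝ) < (i.2 : ℝ) + 1 := by positivity
    rw [hεi]
    rw [div_lt_iff₀ hδ] at hN
    have h4 : 2 * (2 * (1 / ((i.2 : ℝ) + 1))) = 4 / ((i.2 : ℝ) + 1) := by ring
    rw [h4, div_lt_iff₀ hpos]
    nlinarith [mul_le_mul_of_nonneg_left hN2 hδ.le]
  linarith
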